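/- Assume (A2): there exists c_0 > 0 such that a_{k+l} ≤ c_0 a_k a_l for all nonnegative integers k, l. Then for power series mixands and any nonnegative integer m, Σ_{k≥m} ∫_Θ π_θ(k) ν(dθ) ≤ c_0 a_m ∫_Θ t^m ν(dt). -/

import Mathlib

/- Lemma 4 of Roueff–Rydén: for power series mixands `π_θ(k) = a_k θ^k / Z(θ)` on a Borel
set `Θ ⊆ [0, R)` (R the radius of convergence of `Z(t) = Σ a_k t^k`), under (A2)
(`a_{k+l} ≤ c₀ a_k a_l`), one has `Σ_{k ≥ m} ∫ π_θ(k) ν(dθ) ≤ c₀ a_m ∫ t^m ν(dt)`. -/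

open MeasureTheory ENNReal

lemma finsum_lintegral_le {α : Type*} [MeasurableSpace α] (μ : Measure α)
    (f : ℕ → α → ℝ≥0∞) (s : Finset ℕ) :
    ∑ i ∈ s, ∫⁻ x, f i x ∂μ ≤ ∫⁻ x, ∑ i ∈ s, f i x ∂μ := by
  classical
  induction s using Finset.induction with
  | empty => simp
  | insert _ _ hns ih =>
    rename_i n s
    rw [Finset.sum_insert hns]
    calc (∫⁻ x, f n x ∂μ) + ∑ i ∈ s, ∫⁻ x, f i x ∂μ
        ≤ (∫⁻ x, f n x ∂μ) + ∫⁻ x, ∑ i ∈ s, f i x ∂μ := by gcongr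
      _ ≤ ∫⁻ x, f n x + ∑ i ∈ s, f i x ∂μ := le_lintegral_add _ _
      _ = ∫⁻ x, ∑ i ∈ insert n s, f i x ∂μ := by
          simp [Finset.sum_insert hns]

lemma tsum_lintegral_le {α : Type*} [MeasurableSpace α] (μ : Measure α)
    (f : ℕ → α → ℝ≥0∞) :
    ∑' i, ∫⁻ x, f i x ∂μ ≤ ∫⁻ x, ∑' i, f i x ∂μ := by
  rw [ENNReal.tsum_eq_iSup_sum]
  refine iSup_le fun s => ?_
  calc ∑ i ∈ s, ∫⁻ x, f i x ∂μ
      ≤ ∫⁻ x, ∑ i ∈ s, f i x ∂μ := finsum_lintegral_le μ f s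
    _ ≤ ∫⁻ x, ∑' i, f i x ∂μ :=
        lintegral_mono fun x => ENNReal.sum_le_tsum s

theorem statement10
    (a : ℕ → ℝ) (ha_pos : ∀ k, 0 < a k) (ha0 : a 0 = 1)
    (R : ℝ≥0∞) (hR_pos : 0 < R)
    (hR_radius : ∀ t : ℝ, 0 ≤ t →
      (ENNReal.ofReal t < R → Summable fun k => a k * t ^ k) ∧
      (R < ENNReal.ofReal t → ¬ Summable fun k => a k * t ^ k))
    (Θ : Set ℝ) (hΘ_meas : MeasurableSet Θ)
    (hΘ_sub : ∀ t ∈ Θ, 0 ≤ t ∧ ENNReal.ofReal t < R)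
    (ν : Measure Θ)
    (c₀ : ℝ) (hc₀ : 0 < c₀)
    (hA2 : ∀ k l : ℕ, a (k + l) ≤ c₀ * a k * a l)
    (m : ℕ) :
    ∑' k : ℕ,
        ∫⁻ θ : Θ, ENNReal.ofReal
          (a (m + k) * (θ : ℝ) ^ (m + k) / ∑' j : ℕ, a j * (θ : ℝ) ^ j) ∂ν
      ≤ ENNReal.ofReal (c₀ * a m) * ∫⁻ θ : Θ, ENNReal.ofReal ((θ : ℝ) ^ m) ∂ν := by
  have key : ∀ θ : Θ, (∑' k : ℕ, ENNReal.ofReal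
      (a (m + k) * (θ : ℝ) ^ (m + k) / ∑' j : ℕ, a j * (θ : ℝ) ^ j))
      ≤ ENNReal.ofReal (c₀ * a m) * ENNReal.ofReal ((θ : ℝ) ^ m) := by
    intro θ
    obtain ⟨hθ0, hθR⟩ := hΘ_sub θ θ.2
    set t : ℝ := (θ : ℝ)
    have hZsum : Summable fun k => a k * t ^ k := (hR_radius t hθ0).1 hθR
    set Z : ℝ := ∑' j : ℕ, a j * t ^ j with hZ
    have hZ1 : 1 ≤ Z := by
      calc (1:ℝ) = a 0 * t ^ 0 := by simp [ha0]
        _ ≤ Z := Summable.le_tsum hZsum 0 fun j _ =>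
            mul_nonneg (ha_pos j).le (pow_nonneg hθ0 j)
    have hZpos : 0 < Z := lt_of_lt_of_le one_pos hZ1
    -- each term nonneg
    have hnonneg : ∀ k : ℕ, 0 ≤ a (m + k) * t ^ (m + k) / Z := fun k =>
      div_nonneg (mul_nonneg (ha_pos _).le (pow_nonneg hθ0 _)) hZpos.le
    have hbound : ∀ k : ℕ, a (m + k) * t ^ (m + k) / Z
        ≤ c₀ * a m * t ^ m * (a k * t ^ k) / Z := by
      intro k
      apply div_le_div_of_nonneg_right ?_ hZpos.le
      · calc a (m + k) * t ^ (m + k) ≤ (c₀ * a m * a k) * t ^ (m + k) := by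
              apply mul_le_mul_of_nonneg_right (hA2 m k) (by positivity)
          _ = c₀ * a m * t ^ m * (a k * t ^ k) := by rw [pow_add]; ring
    have hsum2 : Summable fun k => c₀ * a m * t ^ m * (a k * t ^ k) / Z := by
      simpa [mul_div_assoc] using (hZsum.div_const Z).mul_left (c₀ * a m * t ^ m)
    have hsum1 : Summable fun k => a (m + k) * t ^ (m + k) / Z :=
      Summable.of_nonneg_of_le hnonneg hbound hsum2
    have htsum_le : (∑' k, a (m + k) * t ^ (m + k) / Z) ≤ c₀ * a m * t ^ m := by
      calc (∑' k, a (m + k) * t ^ (m + k) / Z)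
          ≤ ∑' k, c₀ * a m * t ^ m * (a k * t ^ k) / Z :=
            Summable.tsum_le_tsum hbound hsum1 hsum2
        _ = c₀ * a m * t ^ m * (Z / Z) := by
            rw [hZ, ← tsum_div_const, ← tsum_mul_left]
            exact tsum_congr fun k => mul_div_assoc _ _ _
        _ = c₀ * a m * t ^ m := by rw [div_self (ne_of_gt hZpos), mul_one]
    calc (∑' k : ℕ, ENNReal.ofReal (a (m + k) * t ^ (m + k) / Z))
        = ENNReal.ofReal (∑' k, a (m + k) * t ^ (m + k) / Z) :=
          (ENNReal.ofReal_tsum_of_nonneg hnonneg hsum1).symm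
      _ ≤ ENNReal.ofReal (c₀ * a m * t ^ m) := ENNReal.ofReal_le_ofReal htsum_le
      _ = ENNReal.ofReal (c₀ * a m) * ENNReal.ofReal (t ^ m) :=
          ENNReal.ofReal_mul (mul_nonneg hc₀.le (ha_pos m).le)
  calc ∑' k : ℕ, ∫⁻ θ : Θ, ENNReal.ofReal
          (a (m + k) * (θ : ℝ) ^ (m + k) / ∑' j : ℕ, a j * (θ : ℝ) ^ j) ∂ν
      ≤ ∫⁻ θ : Θ, ∑' k : ℕ, ENNReal.ofReal
          (a (m + k) * (θ : ℝ) ^ (m + k) / ∑' j : ℕ, a j * (θ : ℝ) ^ j) ∂ν :=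
        tsum_lintegral_le ν _
    _ ≤ ∫⁻ θ : Θ, ENNReal.ofReal (c₀ * a m) * ENNReal.ofReal ((θ : ℝ) ^ m) ∂ν :=
        lintegral_mono key
    _ = ENNReal.ofReal (c₀ * a m) * ∫⁻ θ : Θ, ENNReal.ofReal ((θ : ℝ) ^ m) ∂ν :=
        lintegral_const_mul' _ _ ENNReal.ofReal_ne_top
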